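/- Fix n ≥ 1 and let k be a field in which n·1 is invertible. Let V be the n-dimensional k-vector space with basis v₁, …, vₙ, and let s := Σⱼ vⱼ. Define linear maps Δ_M, Δ̃_M : V → V ⊗ V by Δ_M(vᵢ) = vᵢ ⊗ s and Δ̃_M(vᵢ) = s ⊗ vᵢ (the Markovian coproducts of the (n,1)-De Bruijn graph). Then (V, Δ_M, Δ̃_M) is a coassociative co-dialgebra: Δ_M and Δ̃_M are coassociative, (id ⊗ Δ_M) ∘ Δ_M = (id ⊗ Δ̃_M) ∘ Δ_M, (Δ̃_M ⊗ id) ∘ Δ̃_M = (Δ_M ⊗ id) ∘ Δ̃_M, and (Δ̃_M ⊗ id) ∘ Δ_M = (id ⊗ Δ_M) ∘ Δ̃_M. Moreover, the linear maps ε, ε̃ : V → k with ε(vᵢ) = ε̃(vᵢ) = 1/n are right and left counits: (id ⊗ ε) ∘ Δ_M = id and (ε̃ ⊗ id) ∘ Δ̃_M = id. -/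

import Mathlib

open TensorProduct

noncomputable section

variable {k V : Type*} [Field k] [AddCommGroup V] [Module k V]

/-- `(Δ' ⊗ id) ∘ Δ` composed with the standard associator, as a map `V → V ⊗ (V ⊗ V)`. -/
def lcomp (Δ' Δ : V →ₗ[k] V ⊗[k] V) : V →ₗ[k] V ⊗[k] (V ⊗[k] V) :=
  (TensorProduct.assoc k V V V).toLinearMap ∘ₗ TensorProduct.map Δ' LinearMap.id ∘ₗ Δ

/-- `(id ⊗ Δ') ∘ Δ` as a map `V → V ⊗ (V ⊗ V)`. -/
def rcomp (Δ' Δ : V →ₗ[k] V ⊗[k] V) : V →ₗ[k] V ⊗[k] (V ⊗[k] V) :=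
  TensorProduct.map LinearMap.id Δ' ∘ₗ Δ

/-- Coassociativity of a coproduct: `(Δ ⊗ id) ∘ Δ = (id ⊗ Δ) ∘ Δ`. -/
def Coassoc (Δ : V →ₗ[k] V ⊗[k] V) : Prop := lcomp Δ Δ = rcomp Δ Δ

/-- `(D, Δ, Δ̃)` is a coassociative co-dialgebra: both coproducts are coassociative,
`(id ⊗ Δ) ∘ Δ = (id ⊗ Δ̃) ∘ Δ`, `(Δ̃ ⊗ id) ∘ Δ̃ = (Δ ⊗ id) ∘ Δ̃`, and the entanglement
equation `(Δ̃ ⊗ id) ∘ Δ = (id ⊗ Δ) ∘ Δ̃` holds. -/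
def CoDialgebra (Δ Δ' : V →ₗ[k] V ⊗[k] V) : Prop :=
  Coassoc Δ ∧ Coassoc Δ' ∧
  rcomp Δ Δ = rcomp Δ' Δ ∧
  lcomp Δ' Δ' = lcomp Δ Δ' ∧
  lcomp Δ' Δ = rcomp Δ Δ'

/-- The Markovian coproducts `Δ_M(vᵢ) = vᵢ ⊗ Σⱼ vⱼ` and `Δ̃_M(vᵢ) = (Σⱼ vⱼ) ⊗ vᵢ`
of the `(n,1)`-De Bruijn graph make `V` a coassociative co-dialgebra, with right and left
counits `ε(vᵢ) = ε̃(vᵢ) = 1/n`. -/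
theorem stmt3 (n : ℕ) (hn : 1 ≤ n) (k V : Type*) [Field k] [AddCommGroup V] [Module k V]
    (hnk : (n : k) ≠ 0)
    (v : Module.Basis (Fin n) k V)
    (ΔM ΔM' : V →ₗ[k] V ⊗[k] V)
    (hΔ : ∀ i, ΔM (v i) = v i ⊗ₜ[k] (∑ j, v j))
    (hΔ' : ∀ i, ΔM' (v i) = (∑ j, v j) ⊗ₜ[k] v i)
    (ε ε' : V →ₗ[k] k)
    (hε : ∀ i, ε (v i) = (n : k)⁻¹)
    (hε' : ∀ i, ε' (v i) = (n : k)⁻¹) :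
    CoDialgebra ΔM ΔM' ∧
    (TensorProduct.rid k V).toLinearMap ∘ₗ TensorProduct.map LinearMap.id ε ∘ₗ ΔM
      = LinearMap.id ∧
    (TensorProduct.lid k V).toLinearMap ∘ₗ TensorProduct.map ε' LinearMap.id ∘ₗ ΔM'
      = LinearMap.id := by
  have hΔs : ΔM (∑ j, v j) = ∑ j, v j ⊗ₜ[k] (∑ l, v l) := by
    rw [map_sum]; exact Finset.sum_congr rfl fun j _ => hΔ j
  have hΔ's : ΔM' (∑ j, v j) = ∑ j, (∑ l, v l) ⊗ₜ[k] v j := by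
    rw [map_sum]; exact Finset.sum_congr rfl fun j _ => hΔ' j
  refine ⟨⟨?_, ?_, ?_, ?_, ?_⟩, ?_, ?_⟩
  all_goals try unfold Coassoc
  · apply v.ext; intro i
    simp only [lcomp, rcomp, LinearMap.comp_apply, hΔ, hΔs, map_sum,
      TensorProduct.sum_tmul, TensorProduct.tmul_sum, TensorProduct.map_tmul,
      LinearMap.id_apply, LinearEquiv.coe_coe, TensorProduct.assoc_tmul]
    rw [Finset.sum_comm]
  · apply v.ext; intro i
    simp only [lcomp, rcomp, LinearMap.comp_apply, hΔ', hΔ's, map_sum,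
      TensorProduct.sum_tmul, TensorProduct.tmul_sum, TensorProduct.map_tmul,
      LinearMap.id_apply, LinearEquiv.coe_coe, TensorProduct.assoc_tmul]
    rw [Finset.sum_comm]
  · apply v.ext; intro i
    simp only [lcomp, rcomp, LinearMap.comp_apply, hΔ, hΔ', hΔs, hΔ's, map_sum,
      TensorProduct.sum_tmul, TensorProduct.tmul_sum, TensorProduct.map_tmul,
      LinearMap.id_apply, LinearEquiv.coe_coe, TensorProduct.assoc_tmul]
    rw [Finset.sum_comm]
  · apply v.ext; intro i
    simp only [lcomp, rcomp, LinearMap.comp_apply, hΔ, hΔ', hΔs, hΔ's, map_sum,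
      TensorProduct.sum_tmul, TensorProduct.tmul_sum, TensorProduct.map_tmul,
      LinearMap.id_apply, LinearEquiv.coe_coe, TensorProduct.assoc_tmul]
    rw [Finset.sum_comm]
  · apply v.ext; intro i
    simp only [lcomp, rcomp, LinearMap.comp_apply, hΔ, hΔ', hΔs, hΔ's, map_sum,
      TensorProduct.sum_tmul, TensorProduct.tmul_sum, TensorProduct.map_tmul,
      LinearMap.id_apply, LinearEquiv.coe_coe, TensorProduct.assoc_tmul]
    rw [Finset.sum_comm]
  · apply v.ext; intro i
    simp only [LinearMap.comp_apply, hΔ, TensorProduct.tmul_sum, map_sum,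
      TensorProduct.map_tmul, hε, LinearMap.id_apply, LinearEquiv.coe_coe,
      TensorProduct.rid_tmul, Finset.sum_const, Finset.card_univ, Fintype.card_fin]
    rw [map_nsmul, TensorProduct.rid_tmul, ← Nat.cast_smul_eq_nsmul k, smul_smul, mul_inv_cancel₀ hnk, one_smul]
  · apply v.ext; intro i
    simp only [LinearMap.comp_apply, hΔ', TensorProduct.sum_tmul, map_sum,
      TensorProduct.map_tmul, hε', LinearMap.id_apply, LinearEquiv.coe_coe,
      TensorProduct.lid_tmul, Finset.sum_const, Finset.card_univ, Fintype.card_fin]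
    rw [map_nsmul, TensorProduct.lid_tmul, ← Nat.cast_smul_eq_nsmul k, smul_smul, mul_inv_cancel₀ hnk, one_smul]
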